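/- For every α ≥ 1, the semidirect product G_α = (ℤ/2^α × ℤ/2^α) ⋊ ℤ/3, where the generator of ℤ/3 acts by (x, y) ↦ (−y, x − y), has exactly three involutions, namely (2^{α−1}, 0), (0, 2^{α−1}) and (2^{α−1}, 2^{α−1}) (in the normal subgroup), and these three involutions are pairwise conjugate in G_α. Hence G_α is a pertinent group of order 3·4^α. -/

import Mathlib

/-- A finite group is *pertinent* if it has exactly three involutions and
they are pairwise conjugate. -/
def Pertinent (G : Type*) [Group G] : Prop :=
  Finite G ∧ {g : G | orderOf g = 2}.ncard = 3 ∧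
    ∀ a b : G, orderOf a = 2 → orderOf b = 2 → IsConj a b

/-- The additive automorphism `(x, y) ↦ (-y, x - y)` of `ℤ/2^α × ℤ/2^α`. -/
def thetaAddEquiv (α : ℕ) : (ZMod (2 ^ α) × ZMod (2 ^ α)) ≃+ (ZMod (2 ^ α) × ZMod (2 ^ α)) where
  toFun p := (-p.2, p.1 - p.2)
  invFun p := (p.2 - p.1, -p.1)
  left_inv := by rintro ⟨x, y⟩; simp [Prod.ext_iff]
  right_inv := by rintro ⟨x, y⟩; simp [Prod.ext_iff]
  map_add' := by rintro ⟨x, y⟩ ⟨x', y'⟩; simp [Prod.ext_iff]; constructor <;> ring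

/-- The same map as a multiplicative automorphism of
`Multiplicative (ℤ/2^α × ℤ/2^α)`. -/
def A0 (α : ℕ) : MulAut (Multiplicative (ZMod (2 ^ α) × ZMod (2 ^ α))) :=
  AddEquiv.toMultiplicative (thetaAddEquiv α)

lemma A0_cube (α : ℕ) : A0 α ^ 3 = 1 := by
  refine MulEquiv.ext fun p => ?_
  show (A0 α) ((A0 α) ((A0 α) p)) = p
  apply Multiplicative.toAdd.injective
  simp [A0, thetaAddEquiv, Prod.ext_iff]
  ring

/-- The action `θ : ℤ/3 → Aut(ℤ/2^α × ℤ/2^α)` determined by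
`θ(1)(x, y) = (-y, x - y)`. -/
def theta (α : ℕ) :
    Multiplicative (ZMod 3) →* MulAut (Multiplicative (ZMod (2 ^ α) × ZMod (2 ^ α))) :=
  AddMonoidHom.toMultiplicativeLeft
    (ZMod.lift 3
      ⟨zmultiplesHom (Additive (MulAut (Multiplicative (ZMod (2 ^ α) × ZMod (2 ^ α)))))
          (Additive.ofMul (A0 α)),
        by
          show (3 : ℤ) • Additive.ofMul (A0 α) = 0
          have h : (A0 α) ^ (3 : ℤ) = 1 := by
            rw [show (3 : ℤ) = ((3 : ℕ) : ℤ) by norm_num, zpow_natCast, A0_cube]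
          rw [← ofMul_zpow, h, ofMul_one]⟩)

/-- The group `G_α = (ℤ/2^α × ℤ/2^α) ⋊ ℤ/3`, with the generator of `ℤ/3`
acting by `(x, y) ↦ (-y, x - y)`. -/
abbrev Galpha (α : ℕ) :=
  SemidirectProduct (Multiplicative (ZMod (2 ^ α) × ZMod (2 ^ α)))
    (Multiplicative (ZMod 3)) (theta α)

lemma theta_one (α : ℕ) : theta α (Multiplicative.ofAdd (1 : ZMod 3)) = A0 α := by
  simp [theta, AddMonoidHom.toMultiplicativeLeft]
  rw [show (1 : ZMod 3) = ((1 : ℤ) : ZMod 3) from (Int.cast_one).symm]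
  show Additive.toMul (ZMod.lift 3 _ (Multiplicative.toAdd (Multiplicative.ofAdd ((1 : ℤ) : ZMod 3)))) = A0 α
  rw [toAdd_ofAdd, ZMod.lift_coe]
  simp

lemma t_add_t (α : ℕ) (hα : 1 ≤ α) :
    ((2 ^ (α - 1) : ℕ) : ZMod (2 ^ α)) + ((2 ^ (α - 1) : ℕ) : ZMod (2 ^ α)) = 0 := by
  rw [← Nat.cast_add, show 2 ^ (α - 1) + 2 ^ (α - 1) = 2 ^ α by
    rw [← two_mul, ← pow_succ']
    congr 1; omega]
  exact ZMod.natCast_self _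

lemma t_ne_zero (α : ℕ) (hα : 1 ≤ α) : ((2 ^ (α - 1) : ℕ) : ZMod (2 ^ α)) ≠ 0 := by
  rw [Ne, ZMod.natCast_eq_zero_iff]
  intro h
  have := Nat.le_of_dvd (by positivity) h
  have : 2 ^ α ≤ 2 ^ (α - 1) := this
  have h2 : 2 ^ (α - 1) < 2 ^ α := Nat.pow_lt_pow_right (by norm_num) (by omega)
  omega

lemma two_torsion (α : ℕ) (hα : 1 ≤ α) (x : ZMod (2 ^ α)) :
    x + x = 0 ↔ x = 0 ∨ x = ((2 ^ (α - 1) : ℕ) : ZMod (2 ^ α)) := by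
  haveI : NeZero (2 ^ α) := ⟨by positivity⟩
  constructor
  · intro h
    have hv : ((x.val : ℕ) : ZMod (2 ^ α)) = x := ZMod.natCast_zmod_val x
    have h2 : ((x.val + x.val : ℕ) : ZMod (2 ^ α)) = 0 := by push_cast [hv]; exact h
    rw [ZMod.natCast_eq_zero_iff] at h2
    have hlt : x.val < 2 ^ α := ZMod.val_lt x
    have hpow : 2 ^ α = 2 * 2 ^ (α - 1) := by rw [← pow_succ']; congr 1; omega
    obtain ⟨k, hk⟩ := h2
    have h2x : 2 * x.val = 2 * (2 ^ (α - 1) * k) := by rw [two_mul, hk, hpow]; ring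
    have hx : x.val = 2 ^ (α - 1) * k := by omega
    have hk2 : k < 2 := by
      by_contra hge
      push_neg at hge
      have : 2 ^ (α - 1) * 2 ≤ 2 ^ (α - 1) * k := Nat.mul_le_mul_left _ hge
      omega
    interval_cases k
    · left; rw [← hv, hx]; simp
    · right; rw [← hv, hx, mul_one]
  · rintro (rfl | rfl)
    · simp
    · exact t_add_t α hα

lemma order_two_iff {G : Type*} [Group G] (g : G) :
    orderOf g = 2 ↔ g * g = 1 ∧ g ≠ 1 := by
  constructor
  · intro h
    refine ⟨?_, ?_⟩
    · have := pow_orderOf_eq_one g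
      rwa [h, pow_two] at this
    · rintro rfl
      simp at h
  · rintro ⟨h1, h2⟩
    exact orderOf_eq_prime (by rwa [pow_two]) h2

lemma zmod3_sq (h : Multiplicative (ZMod 3)) (hh : h * h = 1) : h = 1 := by
  revert hh; revert h; decide

lemma theta_apply_one (α : ℕ) (n : Multiplicative (ZMod (2 ^ α) × ZMod (2 ^ α))) :
    theta α 1 n = n := by simp

lemma mem_iff (α : ℕ) (hα : 1 ≤ α) (g : Galpha α) :
    orderOf g = 2 ↔
      (g = SemidirectProduct.inl
          (Multiplicative.ofAdd (((2 ^ (α - 1) : ℕ) : ZMod (2 ^ α)), (0 : ZMod (2 ^ α)))) ∨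
       g = SemidirectProduct.inl
          (Multiplicative.ofAdd ((0 : ZMod (2 ^ α)), ((2 ^ (α - 1) : ℕ) : ZMod (2 ^ α)))) ∨
       g = SemidirectProduct.inl
          (Multiplicative.ofAdd (((2 ^ (α - 1) : ℕ) : ZMod (2 ^ α)),
            ((2 ^ (α - 1) : ℕ) : ZMod (2 ^ α))))) := by
  set t : ZMod (2 ^ α) := ((2 ^ (α - 1) : ℕ) : ZMod (2 ^ α)) with ht
  have htne : t ≠ 0 := t_ne_zero α hα
  have htt : t + t = 0 := t_add_t α hα
  rw [order_two_iff]
  obtain ⟨n, h⟩ := g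
  constructor
  · rintro ⟨h1, h2⟩
    have hright : h * h = 1 := congrArg SemidirectProduct.right h1
    have hh1 : h = 1 := zmod3_sq h hright
    subst hh1
    have hleft : n * theta α 1 n = 1 := congrArg SemidirectProduct.left h1
    rw [theta_apply_one] at hleft
    have hn1 : n ≠ 1 := by
      rintro rfl
      exact h2 rfl
    -- additive picture
    have hadd : n.toAdd + n.toAdd = 0 := by
      have := congrArg Multiplicative.toAdd hleft
      simpa using this
    have hx := (two_torsion α hα n.toAdd.1).mp (congrArg Prod.fst hadd)
    have hy := (two_torsion α hα n.toAdd.2).mp (congrArg Prod.snd hadd)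
    have hne : n.toAdd ≠ 0 := by
      intro hz
      apply hn1
      apply Multiplicative.toAdd.injective
      simpa using hz
    have hmk : ∀ p : ZMod (2 ^ α) × ZMod (2 ^ α),
        n.toAdd = p → (⟨n, 1⟩ : Galpha α) = SemidirectProduct.inl (Multiplicative.ofAdd p) := by
      intro p hp
      have : n = Multiplicative.ofAdd p := Multiplicative.toAdd.injective (by simpa using hp)
      rw [this]; rfl
    rcases hx with hx | hx <;> rcases hy with hy | hy
    · exact absurd (Prod.ext hx hy) hne
    · exact Or.inr (Or.inl (hmk _ (Prod.ext hx hy)))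
    · exact Or.inl (hmk _ (Prod.ext hx hy))
    · exact Or.inr (Or.inr (hmk _ (Prod.ext hx hy)))
  · have key : ∀ p : ZMod (2 ^ α) × ZMod (2 ^ α), p ≠ 0 → p + p = 0 →
        ((⟨n, h⟩ : Galpha α) = SemidirectProduct.inl (Multiplicative.ofAdd p) →
          (⟨n, h⟩ : Galpha α) * ⟨n, h⟩ = 1 ∧ (⟨n, h⟩ : Galpha α) ≠ 1) := by
      intro p hp hpp heq
      rw [heq]
      constructor
      · rw [← map_mul]
        have : Multiplicative.ofAdd p * Multiplicative.ofAdd p = 1 := by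
          rw [← ofAdd_add, hpp]; rfl
        rw [this, map_one]
      · simp only [Ne, ← map_one (SemidirectProduct.inl (φ := theta α))]
        intro hcon
        have := SemidirectProduct.inl_injective hcon
        exact hp (by simpa using congrArg Multiplicative.toAdd this)
    rintro (heq | heq | heq)
    · exact key _ (by simp [Prod.ext_iff, htne]) (by simp [Prod.ext_iff, htt]) heq
    · exact key _ (by simp [Prod.ext_iff, htne]) (by simp [Prod.ext_iff, htt]) heq
    · exact key _ (by simp [Prod.ext_iff, htne]) (by simp [Prod.ext_iff, htt]) heq

lemma conj_step (α : ℕ) (n : Multiplicative (ZMod (2 ^ α) × ZMod (2 ^ α))) :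
    IsConj (SemidirectProduct.inl n : Galpha α) (SemidirectProduct.inl (A0 α n)) := by
  rw [isConj_iff]
  refine ⟨SemidirectProduct.inr (Multiplicative.ofAdd (1 : ZMod 3)), ?_⟩
  rw [← MonoidHom.map_inv, ← SemidirectProduct.inl_aut, theta_one]

lemma A0_apply (α : ℕ) (p : ZMod (2 ^ α) × ZMod (2 ^ α)) :
    A0 α (Multiplicative.ofAdd p) = Multiplicative.ofAdd (-p.2, p.1 - p.2) := rfl

lemma instF (α : ℕ) : Finite (Galpha α) :=
  Finite.of_injective (fun g : Galpha α => (g.left, g.right))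
    (fun a b h => SemidirectProduct.ext (congrArg Prod.fst h) (congrArg Prod.snd h))

lemma card_mult (X : Type*) : Nat.card (Multiplicative X) = Nat.card X :=
  Nat.card_congr Multiplicative.toAdd

theorem stmt_9 (α : ℕ) (hα : 1 ≤ α) :
    ({g : Galpha α | orderOf g = 2} =
      {SemidirectProduct.inl
          (Multiplicative.ofAdd (((2 ^ (α - 1) : ℕ) : ZMod (2 ^ α)), (0 : ZMod (2 ^ α)))),
        SemidirectProduct.inl
          (Multiplicative.ofAdd ((0 : ZMod (2 ^ α)), ((2 ^ (α - 1) : ℕ) : ZMod (2 ^ α)))),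
        SemidirectProduct.inl
          (Multiplicative.ofAdd (((2 ^ (α - 1) : ℕ) : ZMod (2 ^ α)),
            ((2 ^ (α - 1) : ℕ) : ZMod (2 ^ α))))}) ∧
    (∀ a b : Galpha α, orderOf a = 2 → orderOf b = 2 → IsConj a b) ∧
    Pertinent (Galpha α) ∧ Nat.card (Galpha α) = 3 * 4 ^ α := by
  have htne : ((2 ^ (α - 1) : ℕ) : ZMod (2 ^ α)) ≠ 0 := t_ne_zero α hα
  have htt : ((2 ^ (α - 1) : ℕ) : ZMod (2 ^ α)) + ((2 ^ (α - 1) : ℕ) : ZMod (2 ^ α)) = 0 :=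
    t_add_t α hα
  have hneg : -((2 ^ (α - 1) : ℕ) : ZMod (2 ^ α)) = ((2 ^ (α - 1) : ℕ) : ZMod (2 ^ α)) := by
    rw [neg_eq_iff_add_eq_zero, htt]
  have h12 : IsConj
      (SemidirectProduct.inl
        (Multiplicative.ofAdd (((2 ^ (α - 1) : ℕ) : ZMod (2 ^ α)), (0 : ZMod (2 ^ α)))) : Galpha α)
      (SemidirectProduct.inl
        (Multiplicative.ofAdd ((0 : ZMod (2 ^ α)), ((2 ^ (α - 1) : ℕ) : ZMod (2 ^ α))))) := by
    have := conj_step α (Multiplicative.ofAdd (((2 ^ (α - 1) : ℕ) : ZMod (2 ^ α)), (0 : ZMod (2 ^ α))))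
    rwa [A0_apply, show (-(0 : ZMod (2 ^ α)), ((2 ^ (α - 1) : ℕ) : ZMod (2 ^ α)) - 0)
        = ((0 : ZMod (2 ^ α)), ((2 ^ (α - 1) : ℕ) : ZMod (2 ^ α))) by simp] at this
  have h23 : IsConj
      (SemidirectProduct.inl
        (Multiplicative.ofAdd ((0 : ZMod (2 ^ α)), ((2 ^ (α - 1) : ℕ) : ZMod (2 ^ α)))) : Galpha α)
      (SemidirectProduct.inl
        (Multiplicative.ofAdd (((2 ^ (α - 1) : ℕ) : ZMod (2 ^ α)),
          ((2 ^ (α - 1) : ℕ) : ZMod (2 ^ α))))) := by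
    have := conj_step α (Multiplicative.ofAdd ((0 : ZMod (2 ^ α)), ((2 ^ (α - 1) : ℕ) : ZMod (2 ^ α))))
    rwa [A0_apply, show (-((2 ^ (α - 1) : ℕ) : ZMod (2 ^ α)), 0 - ((2 ^ (α - 1) : ℕ) : ZMod (2 ^ α)))
        = (((2 ^ (α - 1) : ℕ) : ZMod (2 ^ α)), ((2 ^ (α - 1) : ℕ) : ZMod (2 ^ α))) by
      rw [Prod.mk.injEq]; exact ⟨hneg, by rw [zero_sub, hneg]⟩] at this
  have h13 := h12.trans h23
  have hset : {g : Galpha α | orderOf g = 2} =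
      {SemidirectProduct.inl
          (Multiplicative.ofAdd (((2 ^ (α - 1) : ℕ) : ZMod (2 ^ α)), (0 : ZMod (2 ^ α)))),
        SemidirectProduct.inl
          (Multiplicative.ofAdd ((0 : ZMod (2 ^ α)), ((2 ^ (α - 1) : ℕ) : ZMod (2 ^ α)))),
        SemidirectProduct.inl
          (Multiplicative.ofAdd (((2 ^ (α - 1) : ℕ) : ZMod (2 ^ α)),
            ((2 ^ (α - 1) : ℕ) : ZMod (2 ^ α))))} :=
    Set.ext fun g => by
      simp only [Set.mem_insert_iff, Set.mem_singleton_iff, Set.mem_setOf_eq]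
      exact mem_iff α hα g
  have hconj : ∀ a b : Galpha α, orderOf a = 2 → orderOf b = 2 → IsConj a b := by
    intro a b ha hb
    rcases (mem_iff α hα a).mp ha with rfl | rfl | rfl <;>
      rcases (mem_iff α hα b).mp hb with rfl | rfl | rfl <;>
      first
        | exact IsConj.refl _
        | exact h12 | exact h12.symm | exact h23 | exact h23.symm
        | exact h13 | exact h13.symm
  have hd12 : (SemidirectProduct.inl
      (Multiplicative.ofAdd (((2 ^ (α - 1) : ℕ) : ZMod (2 ^ α)), (0 : ZMod (2 ^ α)))) : Galpha α) ≠
      SemidirectProduct.inl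
        (Multiplicative.ofAdd ((0 : ZMod (2 ^ α)), ((2 ^ (α - 1) : ℕ) : ZMod (2 ^ α)))) := by
    intro h
    apply htne
    simpa using congrArg (fun g : Galpha α => (Multiplicative.toAdd g.left).1) h
  have hd13 : (SemidirectProduct.inl
      (Multiplicative.ofAdd (((2 ^ (α - 1) : ℕ) : ZMod (2 ^ α)), (0 : ZMod (2 ^ α)))) : Galpha α) ≠
      SemidirectProduct.inl
        (Multiplicative.ofAdd (((2 ^ (α - 1) : ℕ) : ZMod (2 ^ α)),
          ((2 ^ (α - 1) : ℕ) : ZMod (2 ^ α)))) := by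
    intro h
    apply htne
    have := congrArg (fun g : Galpha α => (Multiplicative.toAdd g.left).2) h
    simpa using this.symm
  have hd23 : (SemidirectProduct.inl
      (Multiplicative.ofAdd ((0 : ZMod (2 ^ α)), ((2 ^ (α - 1) : ℕ) : ZMod (2 ^ α)))) : Galpha α) ≠
      SemidirectProduct.inl
        (Multiplicative.ofAdd (((2 ^ (α - 1) : ℕ) : ZMod (2 ^ α)),
          ((2 ^ (α - 1) : ℕ) : ZMod (2 ^ α)))) := by
    intro h
    apply htne
    have := congrArg (fun g : Galpha α => (Multiplicative.toAdd g.left).1) h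
    simpa using this.symm
  have hcard : Nat.card (Galpha α) = 3 * 4 ^ α := by
    have hcong : Nat.card (Galpha α) =
        Nat.card (Multiplicative (ZMod (2 ^ α) × ZMod (2 ^ α)) × Multiplicative (ZMod 3)) :=
      Nat.card_congr ⟨fun g => (g.left, g.right), fun p => ⟨p.1, p.2⟩,
        fun g => by cases g; rfl, fun p => rfl⟩
    rw [hcong, Nat.card_prod, card_mult, card_mult, Nat.card_prod, Nat.card_zmod, Nat.card_zmod]
    rw [show (4 : ℕ) = 2 * 2 by norm_num, mul_pow]
    ring
  refine ⟨hset, hconj, ⟨instF α, ?_, hconj⟩, hcard⟩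
  rw [hset]
  exact Set.ncard_eq_three.mpr ⟨_, _, _, hd12, hd13, hd23, rfl⟩
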